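/- Let p > 1, a > 0 and b ∈ ℝ with p(1+a)+b = 0. Assume (f,g) ∈ C²(ℝ)×C¹(ℝ) with supp f, supp g ⊂ {x : |x| ≤ R}, R ≥ 1, and ∫_ℝ g(x)dx > 0. Then there exist constants ε₂ = ε₂(g,p,a,b,R) > 0 and C > 0 independent of ε such that for every 0 < ε ≤ ε₂ and every T ≥ exp(C ε^{−p(p−1)}), there is no continuous solution U ∈ C(ℝ×[0,T]) with supp U ⊂ {(x,t) : |x| ≤ t+R} of the integral equation U = ε u_t⁰ + L'_{a,b}(|U|^p). -/

import Mathlib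

open MeasureTheory Set
open scoped Classical

/-- Japanese bracket `⟨x⟩ = √(1+x²)`. -/
noncomputable def jb (x : ℝ) : ℝ := Real.sqrt (1 + x ^ 2)

/-- The operator `L'_{a,b}`. -/
noncomputable def Lab' (a b : ℝ) (v : ℝ → ℝ → ℝ) (x t : ℝ) : ℝ :=
    (1 / 2) * (∫ s in (0:ℝ)..t,
      v (x + t - s) s /
        (jb (s + jb (x + t - s)) ^ (1 + a) * jb (s - jb (x + t - s)) ^ (1 + b)))
  + (1 / 2) * (∫ s in (0:ℝ)..t,
      v (x - t + s) s /
        (jb (s + jb (x - t + s)) ^ (1 + a) * jb (s - jb (x - t + s)) ^ (1 + b)))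

/-- `u_t⁰(x,t) = (1/2){f'(x+t) − f'(x−t) + g(x+t) + g(x−t)}`. -/
noncomputable def ut0 (f g : ℝ → ℝ) (x t : ℝ) : ℝ :=
  (1 / 2) * (deriv f (x + t) - deriv f (x - t) + g (x + t) + g (x - t))

/-- Indicator `χ(x,t)` of the region `t − |x| > R`. -/
noncomputable def chiR (R x t : ℝ) : ℝ := if R < t - |x| then 1 else 0

/-- The weight function `w(x,t)`. -/
noncomputable def wgt (a R x t : ℝ) : ℝ :=
  if 0 < a then chiR R x t * (1 + t - |x|) ^ (1 + a) + (1 - chiR R x t)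
  else if a = 0 then
    chiR R x t * (1 + t - |x|) + (1 - chiR R x t) / Real.log (t + |x| + R)
  else if -1 ≤ a then
    chiR R x t * (1 + t - |x|) ^ (1 + a) + (1 - chiR R x t) * (t + |x| + R) ^ a
  else chiR R x t * (1 + t + |x|) ^ (1 + a) + (1 - chiR R x t) * (t + |x| + R) ^ a

/-- The weighted sup-norm `‖U‖ = sup_{ℝ×[0,T]} |w(x,t)U(x,t)|`. -/
noncomputable def wnorm (a R T : ℝ) (U : ℝ → ℝ → ℝ) : ℝ :=
  ⨆ q : ℝ × Set.Icc (0:ℝ) T, |wgt a R q.1 (q.2 : ℝ) * U q.1 (q.2 : ℝ)|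

/-- The quantity `E_{a,b}(T)`. -/
noncomputable def Eab (p a b R T : ℝ) : ℝ :=
  if 0 < a ∧ 0 < p * (1 + a) + b then 1
  else if a = 0 ∧ -p ≤ b then Real.log (T + 3 * R) ^ p
  else if 0 < a ∧ p * (1 + a) + b = 0 then Real.log (T + 3 * R)
  else if a < 0 ∧ -p ≤ b then (T + 2 * R) ^ (-(a * p))
  else (T + 2 * R) ^ (-(p * (1 + a)) - b)

/-- The quantity `D_a(T)`. -/
noncomputable def Da (a R T : ℝ) : ℝ :=
  if 0 < a then 1
  else if a = 0 then Real.log (T + 3 * R)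
  else (T + 2 * R) ^ (-a)

/-- The five regimes of parameters `(a,b)` appearing in the lifespan estimates. -/
def Regime (p a b : ℝ) : Prop :=
  (0 < a ∧ 0 < p * (1 + a) + b) ∨ (a = 0 ∧ -p ≤ b) ∨
  (0 < a ∧ p * (1 + a) + b = 0) ∨ (a < 0 ∧ -p ≤ b) ∨
  (p * (1 + a) + b < 0 ∧ b < -p)

/-- `u` is a classical solution of the IVP
`u_tt − u_xx = |u_t|^p / (⟨t+⟨x⟩⟩^{1+a}⟨t−⟨x⟩⟩^{1+b})` on `ℝ × [0,T]`
with data `u(x,0) = εf(x)`, `u_t(x,0) = εg(x)`. -/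
def IsClassicalSol (p a b ε T : ℝ) (f g : ℝ → ℝ) (u : ℝ → ℝ → ℝ) : Prop :=
  ContDiffOn ℝ 2 (fun q : ℝ × ℝ => u q.1 q.2)
    ((Set.univ : Set ℝ) ×ˢ Set.Icc (0:ℝ) T) ∧
  (∀ x t : ℝ, 0 < t → t < T →
    deriv (deriv (fun τ => u x τ)) t - deriv (deriv (fun y => u y t)) x
      = |deriv (fun τ => u x τ) t| ^ p /
          (jb (t + jb x) ^ (1 + a) * jb (t - jb x) ^ (1 + b))) ∧
  (∀ x : ℝ, u x 0 = ε * f x) ∧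
  (∀ x : ℝ, deriv (fun τ => u x τ) 0 = ε * g x)

/-- `U` is a continuous solution, supported in `{|x| ≤ t+R}`, of the integral
equation `U = ε u_t⁰ + L'_{a,b}(|U|^p)` on `ℝ × [0,T]`. -/
def IsIntSol (p a b R ε T : ℝ) (f g : ℝ → ℝ) (U : ℝ → ℝ → ℝ) : Prop :=
  ContinuousOn (fun q : ℝ × ℝ => U q.1 q.2)
    ((Set.univ : Set ℝ) ×ˢ Set.Icc (0:ℝ) T) ∧
  (∀ x t : ℝ, 0 ≤ t → t ≤ T → t + R < |x| → U x t = 0) ∧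
  (∀ x t : ℝ, 0 ≤ t → t ≤ T →
    U x t = ε * ut0 f g x t + Lab' a b (fun y s => |U y s| ^ p) x t)

/-! ### Basic facts about the Japanese bracket -/

lemma jb_nonneg (x : ℝ) : 0 ≤ jb x := Real.sqrt_nonneg _

lemma one_le_jb (x : ℝ) : 1 ≤ jb x := by
  have h : (1:ℝ) ≤ 1 + x ^ 2 := by nlinarith [sq_nonneg x]
  calc (1:ℝ) = Real.sqrt 1 := by simp
    _ ≤ jb x := Real.sqrt_le_sqrt h

lemma jb_pos (x : ℝ) : 0 < jb x := lt_of_lt_of_le one_pos (one_le_jb x)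

lemma abs_le_jb (x : ℝ) : |x| ≤ jb x := by
  rw [jb, ← Real.sqrt_sq_eq_abs]
  exact Real.sqrt_le_sqrt (by nlinarith)

lemma le_jb (x : ℝ) : x ≤ jb x := (le_abs_self x).trans (abs_le_jb x)

lemma jb_le (x : ℝ) : jb x ≤ |x| + 1 := by
  rw [jb, show |x| + 1 = Real.sqrt ((|x|+1)^2) by
    rw [Real.sqrt_sq (by positivity)]]
  exact Real.sqrt_le_sqrt (by nlinarith [abs_nonneg x, sq_abs x])

lemma continuous_jb : Continuous jb := by
  unfold jb; fun_prop

/-! ### The kernel -/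

noncomputable def ker (a b y s : ℝ) : ℝ :=
  jb (s + jb y) ^ (1 + a) * jb (s - jb y) ^ (1 + b)

lemma ker_pos (a b y s : ℝ) : 0 < ker a b y s :=
  mul_pos (Real.rpow_pos_of_pos (jb_pos _) _) (Real.rpow_pos_of_pos (jb_pos _) _)

lemma continuous_jb_rpow (c : ℝ) {w : ℝ → ℝ} (hw : Continuous w) :
    Continuous fun s => jb (w s) ^ c := by
  exact (continuous_jb.comp hw).rpow_const (fun s => Or.inl (jb_pos _).ne')

lemma continuous_ker {w : ℝ → ℝ} (a b : ℝ) (hw : Continuous w) :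
    Continuous fun s => ker a b (w s) s := by
  unfold ker
  exact (continuous_jb_rpow (1+a) (continuous_id.add (continuous_jb.comp hw))).mul
    (continuous_jb_rpow (1+b) (continuous_id.sub (continuous_jb.comp hw)))

/-! ### Lower bounds for solutions of the integral equation -/

section sol
variable {p a b R T ε : ℝ} {f g : ℝ → ℝ} {U : ℝ → ℝ → ℝ}

lemma F_contOn (hp : 0 < p) (hU : IsIntSol p a b R ε T f g U) {w : ℝ → ℝ}
    (hw : Continuous w) {t : ℝ} (htT : t ≤ T) :
    ContinuousOn (fun s => |U (w s) s| ^ p / ker a b (w s) s) (Icc 0 t) := by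
  have hcU : ContinuousOn (fun s => U (w s) s) (Icc 0 t) := by
    refine (hU.1.comp ((hw.prodMk continuous_id).continuousOn) ?_)
    intro s hs
    exact ⟨trivial, hs.1, hs.2.trans htT⟩
  have habs : ContinuousOn (fun s => |U (w s) s| ^ p) (Icc 0 t) := by
    have : Continuous fun z : ℝ => |z| ^ p := by
      rw [continuous_iff_continuousAt]
      intro z
      exact (Real.continuousAt_rpow_const _ _ (Or.inr hp.le)).comp continuous_abs.continuousAt
    exact this.comp_continuousOn hcU
  exact habs.div (continuous_ker a b hw).continuousOn
    (fun s _ => (ker_pos a b (w s) s).ne')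

lemma F_nonneg (y s : ℝ) : 0 ≤ |U y s| ^ p / ker a b y s :=
  div_nonneg (Real.rpow_nonneg (abs_nonneg _) _) (ker_pos a b y s).le

lemma lab_eq (x t : ℝ) :
    Lab' a b (fun y s => |U y s| ^ p) x t =
      (1/2) * (∫ s in (0:ℝ)..t, |U (x + t - s) s| ^ p / ker a b (x + t - s) s)
      + (1/2) * (∫ s in (0:ℝ)..t, |U (x - t + s) s| ^ p / ker a b (x - t + s) s) := rfl

lemma lab_nonneg (ht : 0 ≤ t) (x : ℝ) :
    0 ≤ Lab' a b (fun y s => |U y s| ^ p) x t := by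
  rw [lab_eq]
  have h1 := intervalIntegral.integral_nonneg (μ := volume)
    (f := fun s => |U (x + t - s) s| ^ p / ker a b (x + t - s) s) ht
    (fun u _ => F_nonneg _ _)
  have h2 := intervalIntegral.integral_nonneg (μ := volume)
    (f := fun s => |U (x - t + s) s| ^ p / ker a b (x - t + s) s) ht
    (fun u _ => F_nonneg _ _)
  positivity

lemma U_ge_ut0 (hU : IsIntSol p a b R ε T f g U) {x t : ℝ} (h0 : 0 ≤ t) (htT : t ≤ T) :
    ε * ut0 f g x t ≤ U x t := by
  rw [hU.2.2 x t h0 htT]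
  linarith [lab_nonneg (p := p) (U := U) (a := a) (b := b) h0 x]

/-- Core estimate: the solution dominates half the integral of a minorant of
one of the two characteristic integrands, over a subinterval. -/
lemma intsol_lower (hp : 0 < p) (hU : IsIntSol p a b R ε T f g U)
    {x t s₁ s₂ : ℝ} (h0 : 0 ≤ s₁) (h12 : s₁ ≤ s₂) (h2t : s₂ ≤ t) (htT : t ≤ T)
    (hz : ut0 f g x t = 0) {w : ℝ → ℝ}
    (hw : (w = fun s => x + t - s) ∨ (w = fun s => x - t + s))
    {φ : ℝ → ℝ} (hφc : ContinuousOn φ (Icc s₁ s₂))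
    (hφ : ∀ s ∈ Icc s₁ s₂, φ s ≤ |U (w s) s| ^ p / ker a b (w s) s) :
    (1/2) * (∫ s in s₁..s₂, φ s) ≤ U x t := by
  have ht0 : (0:ℝ) ≤ t := le_trans (le_trans h0 h12) h2t
  have hwc : Continuous w := by
    rcases hw with h | h <;> rw [h] <;> continuity
  set F : ℝ → ℝ := fun s => |U (w s) s| ^ p / ker a b (w s) s with hF
  have hFc : ContinuousOn F (Icc 0 t) := F_contOn hp hU hwc htT
  have hsub1 : Icc (0:ℝ) s₁ ⊆ Icc 0 t := Icc_subset_Icc le_rfl (le_trans h12 h2t)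
  have hsub2 : Icc s₁ s₂ ⊆ Icc 0 t := Icc_subset_Icc h0 h2t
  have hsub3 : Icc s₂ t ⊆ Icc 0 t := Icc_subset_Icc (le_trans h0 h12) le_rfl
  have hi1 : IntervalIntegrable F volume 0 s₁ :=
    (hFc.mono (by rwa [uIcc_of_le h0])).intervalIntegrable
  have hi2 : IntervalIntegrable F volume s₁ s₂ :=
    (hFc.mono (by rwa [uIcc_of_le h12])).intervalIntegrable
  have hi3 : IntervalIntegrable F volume s₂ t :=
    (hFc.mono (by rwa [uIcc_of_le h2t])).intervalIntegrable
  -- ∫₀ᵗ F ≥ ∫_{s₁}^{s₂} F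
  have hsplit : (∫ s in (0:ℝ)..s₁, F s) + (∫ s in s₁..s₂, F s) + (∫ s in s₂..t, F s)
      = ∫ s in (0:ℝ)..t, F s := by
    rw [intervalIntegral.integral_add_adjacent_intervals hi1 hi2,
      intervalIntegral.integral_add_adjacent_intervals (hi1.trans hi2) hi3]
  have hn1 : 0 ≤ ∫ s in (0:ℝ)..s₁, F s :=
    intervalIntegral.integral_nonneg h0 (fun u _ => F_nonneg _ _)
  have hn3 : 0 ≤ ∫ s in s₂..t, F s :=
    intervalIntegral.integral_nonneg h2t (fun u _ => F_nonneg _ _)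
  have hmono : (∫ s in s₁..s₂, φ s) ≤ ∫ s in s₁..s₂, F s :=
    intervalIntegral.integral_mono_on h12 (ContinuousOn.intervalIntegrable (by rw [uIcc_of_le h12]; exact hφc))
      hi2 hφ
  have hbig : (∫ s in s₁..s₂, φ s) ≤ ∫ s in (0:ℝ)..t, F s := by
    rw [← hsplit]; linarith
  have hkey : (1/2) * (∫ s in (0:ℝ)..t, F s) ≤ Lab' a b (fun y s => |U y s| ^ p) x t := by
    rw [lab_eq]
    rcases hw with h | h
    · have h2 := intervalIntegral.integral_nonneg (μ := volume)
        (f := fun s => |U (x - t + s) s| ^ p / ker a b (x - t + s) s) ht0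
        (fun u _ => F_nonneg _ _)
      rw [hF, h]
      linarith
    · have h1 := intervalIntegral.integral_nonneg (μ := volume)
        (f := fun s => |U (x + t - s) s| ^ p / ker a b (x + t - s) s) ht0
        (fun u _ => F_nonneg _ _)
      rw [hF, h]
      linarith
  have := hU.2.2 x t ht0 htT
  rw [this, hz, mul_zero, zero_add]
  calc (1/2) * (∫ s in s₁..s₂, φ s) ≤ (1/2) * (∫ s in (0:ℝ)..t, F s) := by linarith
    _ ≤ _ := hkey

end sol
open MeasureTheory Set

/-- FTC computation: `∫ log((2s+c)/K)^e/(2s+c) ds = log(M/K)^(e+1)/(2(e+1))`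
when the lower endpoint makes the log vanish. -/
lemma ftc_log {e K c α β M : ℝ} (he : 0 ≤ e) (hK : 0 < K) (hαβ : α ≤ β)
    (hα : 2*α - c = K) (hβ : 2*β - c = M) :
    ∫ s in α..β, (Real.log ((2*s - c)/K))^e / (2*s - c)
      = (Real.log (M/K))^(e+1) / (2*(e+1)) := by
  have he1 : (1:ℝ) ≤ e + 1 := by linarith
  have hppos : ∀ s ∈ Icc α β, 0 < 2*s - c := by
    intro s hs; nlinarith [hs.1]
  have hlog_nonneg : ∀ s ∈ Icc α β, 0 ≤ Real.log ((2*s - c)/K) := by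
    intro s hs
    apply Real.log_nonneg
    rw [le_div_iff₀ hK]
    nlinarith [hs.1]
  set H : ℝ → ℝ := fun s => (Real.log ((2*s - c)/K))^(e+1) / (2*(e+1)) with hH
  set φ : ℝ → ℝ := fun s => (Real.log ((2*s - c)/K))^e / (2*s - c) with hφ
  have hderiv : ∀ s ∈ uIcc α β, HasDerivAt H (φ s) s := by
    intro s hs
    rw [uIcc_of_le hαβ] at hs
    have hpos := hppos s hs
    have hd1 : HasDerivAt (fun s : ℝ => (2*s - c)/K) (2/K) s := by
      have : HasDerivAt (fun s : ℝ => 2*s - c) 2 s := by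
        simpa using ((hasDerivAt_id s).const_mul 2).sub_const c
      simpa using this.div_const K
    have hne : (2*s - c)/K ≠ 0 := by positivity
    have hd2 : HasDerivAt (fun s : ℝ => Real.log ((2*s - c)/K)) (2/(2*s-c)) s := by
      have := hd1.log hne
      convert this using 1
      field_simp
    have hd3 : HasDerivAt (fun z : ℝ => z ^ (e+1))
        ((e+1) * (Real.log ((2*s - c)/K)) ^ e) (Real.log ((2*s - c)/K)) := by
      have := Real.hasDerivAt_rpow_const (x := Real.log ((2*s - c)/K)) (p := e+1)
        (Or.inr he1)
      simpa using this
    have hd4 := (hd3.comp s hd2).div_const (2*(e+1))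
    refine hd4.congr_deriv ?_
    rw [hφ]
    field_simp
  have hint : IntervalIntegrable φ volume α β := by
    apply ContinuousOn.intervalIntegrable
    rw [uIcc_of_le hαβ]
    apply ContinuousOn.div
    · intro s hs
      have hpos := hppos s hs
      apply ContinuousWithinAt.rpow_const
      · apply ContinuousAt.continuousWithinAt
        have : ContinuousAt (fun s : ℝ => (2*s - c)/K) s := by fun_prop
        exact (Real.continuousAt_log (by positivity)).comp this
      · exact Or.inr he
    · intro s hs
      apply ContinuousAt.continuousWithinAt; fun_prop
    · intro s hs; exact (hppos s hs).ne'
  have := intervalIntegral.integral_eq_sub_of_hasDerivAt hderiv hint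
  rw [this, hH]
  have h1 : 2*α - c = K := hα
  have hMK : (2*β - c)/K = M/K := by rw [hβ]
  simp only []
  rw [show (2*α - c)/K = 1 by rw [h1]; field_simp, hMK, Real.log_one,
    Real.zero_rpow (by linarith : e + 1 ≠ 0)]
  ring

/-- rpow algebra used to simplify the integrand lower bound. -/
lemma rpow_algebra {p a b N τ X L k : ℝ} (hab : p * (1 + a) + b = 0)
    (hτ : 0 < τ) (hX : 0 < X) (hL : 0 ≤ L) (hN : 0 ≤ N) :
    (N * τ^(-(1+a)) * L^k)^p / ((2*X)^(1+a) * (τ/2)^(1+b))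
      = N^p * 2^(1+b) * (2*X)^(-(1+a)) * L^(k*p) / τ := by
  have h2X : (0:ℝ) < 2*X := by linarith
  have hτ2 : (0:ℝ) < τ/2 := by linarith
  have hnum : (N * τ^(-(1+a)) * L^k)^p = N^p * τ^(-(1+a)*p) * L^(k*p) := by
    rw [Real.mul_rpow (by positivity) (Real.rpow_nonneg hL _),
      Real.mul_rpow hN (Real.rpow_nonneg hτ.le _),
      ← Real.rpow_mul hτ.le, ← Real.rpow_mul hL]
  rw [hnum]
  rw [Real.div_rpow hτ.le (by norm_num : (0:ℝ) ≤ 2)]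
  have hexp : -(1+a)*p + -(1+b) = -1 := by nlinarith
  have hτsplit : τ^(-(1+a)*p) = τ^(-1 : ℝ) * τ^(1+b) := by
    rw [← Real.rpow_add hτ]
    congr 1
    linarith
  rw [hτsplit]
  have hXinv : ((2*X)^(1+a) : ℝ)⁻¹ = (2*X)^(-(1+a)) := by
    rw [← Real.rpow_neg h2X.le]
  have h2ne : ((2:ℝ)^(1+b)) ≠ 0 := by positivity
  have hXne : ((2*X)^(1+a) : ℝ) ≠ 0 := by positivity
  have hτne : (τ^(1+b) : ℝ) ≠ 0 := by positivity
  have hXc : (2*X)^(-(1+a)) * (2*X)^(1+a) = 1 := by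
    rw [← Real.rpow_add h2X, show (-(1+a) + (1+a) : ℝ) = 0 by ring, Real.rpow_zero]
  rw [Real.rpow_neg_one]
  rw [div_eq_div_iff (by positivity) hτ.ne']
  field_simp
  rw [mul_assoc (N ^ p * L ^ (k * p)), hXc, mul_one]

/-! ### Vanishing of `ut0` away from the data -/

lemma deriv_zero_outside {f : ℝ → ℝ} {R : ℝ} (hsf : ∀ x : ℝ, R < |x| → f x = 0)
    {z : ℝ} (hz : R < |z|) : deriv f z = 0 := by
  have hev : f =ᶠ[nhds z] (fun _ => 0) := by
    have hopen : IsOpen {y : ℝ | R < |y|} := isOpen_lt continuous_const continuous_abs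
    filter_upwards [hopen.mem_nhds hz] with y hy
    exact hsf y hy
  rw [hev.deriv_eq, deriv_const]

lemma ut0_strip {f g : ℝ → ℝ} {R : ℝ} (hsf : ∀ x : ℝ, R < |x| → f x = 0)
    (hsg : ∀ x : ℝ, R < |x| → g x = 0) (hR : 0 ≤ R) {x t : ℝ} (h : x - t < -R) :
    ut0 f g x t = (1/2) * (deriv f (x + t) + g (x + t)) := by
  have habs : R < |x - t| := by rw [abs_sub_comm, abs_of_nonneg (by linarith)]; linarith
  rw [ut0, deriv_zero_outside hsf habs, hsg _ habs]
  ring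

lemma ut0_zero {f g : ℝ → ℝ} {R : ℝ} (hsf : ∀ x : ℝ, R < |x| → f x = 0)
    (hsg : ∀ x : ℝ, R < |x| → g x = 0) (hR : 0 ≤ R) {x t : ℝ}
    (h1 : R < x + t) (h2 : x - t < -R) : ut0 f g x t = 0 := by
  rw [ut0_strip hsf hsg hR h2, deriv_zero_outside hsf (by rw [abs_of_pos (by linarith)]; exact h1),
    hsg _ (by rw [abs_of_pos (by linarith)]; exact h1)]
  ring

/-- From `∫ g > 0` produce an interval where `f' + g` is bounded below. -/
lemma exists_bump {R : ℝ} {f g : ℝ → ℝ} (hf : ContDiff ℝ 2 f) (hg : ContDiff ℝ 1 g)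
    (hR : 1 ≤ R) (hsf : ∀ x : ℝ, R < |x| → f x = 0) (hsg : ∀ x : ℝ, R < |x| → g x = 0)
    (hgint : 0 < ∫ x : ℝ, g x) :
    ∃ x0 δ c : ℝ, 0 < δ ∧ δ ≤ 1 ∧ 0 < c ∧ |x0| ≤ R ∧
      ∀ y ∈ Set.Icc (x0 - δ) (x0 + δ), c ≤ deriv f y + g y := by
  have hdfc : Continuous (deriv f) := hf.continuous_deriv (by norm_num)
  have hgc : Continuous g := hg.continuous
  have hdf0 : ∀ z : ℝ, R < |z| → deriv f z = 0 := fun z hz => deriv_zero_outside hsf hz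
  -- compact support
  have hcsf : HasCompactSupport (deriv f) := by
    apply HasCompactSupport.intro (isCompact_Icc (a := -R) (b := R))
    intro z hz
    apply hdf0
    rcases not_and_or.mp hz with h | h
    · rw [abs_of_neg (by push_neg at h; linarith)]; push_neg at h; linarith
    · push_neg at h; rw [abs_of_pos (by linarith)]; exact h
  have hcsg : HasCompactSupport g := by
    apply HasCompactSupport.intro (isCompact_Icc (a := -R) (b := R))
    intro z hz
    apply hsg
    rcases not_and_or.mp hz with h | h
    · rw [abs_of_neg (by push_neg at h; linarith)]; push_neg at h; linarith
    · push_neg at h; rw [abs_of_pos (by linarith)]; exact h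
  have hif : Integrable (deriv f) := hdfc.integrable_of_hasCompactSupport hcsf
  have hig : Integrable g := hgc.integrable_of_hasCompactSupport hcsg
  -- ∫ deriv f = 0
  have hdfint : (∫ x : ℝ, deriv f x) = 0 := by
    have hle : -(R+1) ≤ (R+1 : ℝ) := by linarith
    have h1 : (∫ x : ℝ, deriv f x) = ∫ x in Set.Ioc (-(R+1)) (R+1), deriv f x := by
      rw [setIntegral_eq_integral_of_forall_compl_eq_zero]
      intro z hz
      apply hdf0
      simp only [Set.mem_Ioc, not_and_or] at hz
      rcases hz with h | h
      · rw [abs_of_neg (by push_neg at h; linarith)]; push_neg at h; linarith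
      · push_neg at h; rw [abs_of_pos (by linarith)]; linarith
    rw [h1, ← intervalIntegral.integral_of_le hle]
    rw [intervalIntegral.integral_deriv_eq_sub
      (fun z _ => (hf.differentiable (by norm_num)).differentiableAt)
      ((hdfc.continuousOn).intervalIntegrable)]
    rw [hsf (R+1) (by rw [abs_of_pos (by linarith)]; linarith),
      hsf (-(R+1)) (by rw [abs_of_neg (by linarith)]; linarith)]
    ring
  -- existence of a positive point of h := f' + g
  have hhc : Continuous fun y => deriv f y + g y := hdfc.add hgc
  have hx0 : ∃ x0 : ℝ, 0 < deriv f x0 + g x0 := by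
    by_contra hno
    push_neg at hno
    have : (∫ x : ℝ, (deriv f x + g x)) ≤ 0 :=
      integral_nonpos (fun x => hno x)
    rw [integral_add hif hig, hdfint] at this
    linarith
  obtain ⟨x0, hx0pos⟩ := hx0
  have hx0R : |x0| ≤ R := by
    by_contra hout
    push_neg at hout
    rw [hdf0 x0 hout, hsg x0 hout] at hx0pos
    linarith
  -- continuity neighborhood
  have hev : ∀ᶠ y in nhds x0, (deriv f x0 + g x0)/2 < deriv f y + g y := by
    have hca : ContinuousAt (fun y => deriv f y + g y) x0 := hhc.continuousAt
    exact hca.eventually_const_lt (by linarith)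
  rw [Metric.eventually_nhds_iff] at hev
  obtain ⟨δ', hδ'pos, hδ'⟩ := hev
  refine ⟨x0, min (δ'/2) 1, (deriv f x0 + g x0)/2, by positivity, min_le_right _ _,
    by positivity, hx0R, ?_⟩
  intro y hy
  have hdist : dist y x0 < δ' := by
    rw [Real.dist_eq]
    have h1 : |y - x0| ≤ min (δ'/2) 1 :=
      abs_le.mpr ⟨by linarith [hy.1], by linarith [hy.2]⟩
    calc |y - x0| ≤ min (δ'/2) 1 := h1
      _ ≤ δ'/2 := min_le_left _ _
      _ < δ' := by linarith
  exact (hδ' hdist).le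

section main
variable {p a b R T ε : ℝ} {f g : ℝ → ℝ} {U : ℝ → ℝ → ℝ}

/-- Claim 0: bound on the characteristic strip emanating from where `f' + g ≥ c`. -/
lemma strip_bound (hp : 0 < p) (hU : IsIntSol p a b R ε T f g U) (hε : 0 ≤ ε)
    {x0 δ c : ℝ} (hδ1 : δ ≤ 1) (hx0 : |x0| ≤ R) (hR : 1 ≤ R)
    (hh : ∀ y ∈ Icc (x0 - δ) (x0 + δ), c ≤ deriv f y + g y)
    (hsf : ∀ z : ℝ, R < |z| → f z = 0) (hsg : ∀ z : ℝ, R < |z| → g z = 0)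
    {x t : ℝ} (hxt : x + t ∈ Icc (x0 - δ) (x0 + δ)) (ht : R + 1 ≤ t) (htT : t ≤ T) :
    ε * (c / 2) ≤ U x t := by
  obtain ⟨hxt1, hxt2⟩ := hxt
  have hx0R : x0 ≤ R := (abs_le.1 hx0).2
  have hxmt : x - t < -R := by linarith
  have h0t : (0:ℝ) ≤ t := by linarith
  have hut : ut0 f g x t = (1/2) * (deriv f (x + t) + g (x + t)) :=
    ut0_strip hsf hsg (by linarith) hxmt
  have hc2 : c / 2 ≤ ut0 f g x t := by
    rw [hut]
    have := hh (x + t) ⟨hxt1, hxt2⟩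
    linarith
  calc ε * (c/2) ≤ ε * ut0 f g x t := mul_le_mul_of_nonneg_left hc2 hε
    _ ≤ U x t := U_ge_ut0 hU h0t htT

/-- Claim 1: interior bound in the region `Σ₁`. -/
lemma sigma1_bound (hp : 1 < p) (ha : 0 < a) (hab : p * (1 + a) + b = 0)
    (hU : IsIntSol p a b R ε T f g U) (hε : 0 ≤ ε)
    {x0 δ c : ℝ} (hδ : 0 < δ) (hδ1 : δ ≤ 1) (hc : 0 ≤ c) (hx0 : |x0| ≤ R) (hR : 1 ≤ R)
    (hh : ∀ y ∈ Icc (x0 - δ) (x0 + δ), c ≤ deriv f y + g y)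
    (hsf : ∀ z : ℝ, R < |z| → f z = 0) (hsg : ∀ z : ℝ, R < |z| → g z = 0)
    {x t : ℝ} (h1 : x - t ≤ -(3*R+3)) (h2 : 3*R+3 ≤ x + t) (htT : t ≤ T) :
    (δ/2) * (ε*(c/2))^p * 2^(-(1+a)) * (t-x)^(-(1+a)) ≤ U x t := by
  have hp0 : (0:ℝ) < p := by linarith
  have hx0R := abs_le.1 hx0
  set s₁ := (x0 - δ - (x - t))/2 with hs₁
  set s₂ := (x0 + δ - (x - t))/2 with hs₂
  have hs1R : R + 1 ≤ s₁ := by rw [hs₁]; linarith [hx0R.1]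
  have h0 : 0 ≤ s₁ := by linarith
  have h12 : s₁ ≤ s₂ := by rw [hs₁, hs₂]; linarith
  have h2t : s₂ ≤ t := by rw [hs₂]; linarith [hx0R.2]
  have htx : 3*R+3 ≤ t - x := by linarith
  have hz : ut0 f g x t = 0 := ut0_zero hsf hsg (by linarith)
    (by linarith) (by linarith)
  have h1b : 1 + b ≤ 0 := by nlinarith
  set C₀ : ℝ := (ε*(c/2))^p * (2*(t-x))^(-(1+a)) with hC₀
  have hφ : ∀ s ∈ Icc s₁ s₂, C₀ ≤ |U ((fun s => x - t + s) s) s| ^ p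
      / ker a b ((fun s => x - t + s) s) s := by
    intro s hs
    simp only []
    set y := x - t + s with hy
    have hyJ : y + s ∈ Icc (x0 - δ) (x0 + δ) := by
      constructor
      · rw [hy]; have := hs.1; rw [hs₁] at this; linarith
      · rw [hy]; have := hs.2; rw [hs₂] at this; linarith
    have hsR : R + 1 ≤ s := le_trans hs1R hs.1
    have hsT : s ≤ T := le_trans (le_trans hs.2 h2t) htT
    have hUb : ε * (c/2) ≤ U y s := strip_bound hp0 hU hε hδ1 hx0 hR hh hsf hsg hyJ hsR hsT
    have hnum : (ε*(c/2))^p ≤ |U y s| ^ p :=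
      Real.rpow_le_rpow (by positivity) (le_trans hUb (le_abs_self _)) hp0.le
    have hys : |y + s| ≤ R + 1 := by
      rw [abs_le]; constructor <;> [skip; skip] <;>
        [linarith [hyJ.1, hx0R.1]; linarith [hyJ.2, hx0R.2]]
    have hyabs : |y| ≤ R + 1 + s := by
      have : |y| ≤ |y + s| + |s| := by
        calc |y| = |(y + s) + (-s)| := by ring_nf
          _ ≤ |y + s| + |(-s)| := abs_add_le _ _
          _ = |y + s| + |s| := by rw [abs_neg]
      rw [abs_of_nonneg (by linarith : (0:ℝ) ≤ s)] at this
      linarith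
    have hA : jb (s + jb y) ≤ 2*(t-x) := by
      have h1' : jb (s + jb y) ≤ |s + jb y| + 1 := jb_le _
      have h2' : |s + jb y| = s + jb y := abs_of_nonneg (by linarith [jb_nonneg y])
      have h3' : jb y ≤ |y| + 1 := jb_le y
      have h4' : 2*s ≤ x0 + δ - (x - t) := by
        have := hs.2; rw [hs₂] at this; linarith
      rw [h2'] at h1'
      have : jb (s + jb y) ≤ 2*s + R + 3 := by linarith
      have h5' : 2*s + R + 3 ≤ (t - x) + 2*R + 4 := by linarith [hx0R.2]
      linarith
    have hAr : jb (s + jb y) ^ (1+a) ≤ (2*(t-x))^(1+a) :=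
      Real.rpow_le_rpow (jb_nonneg _) hA (by linarith)
    have hBr : jb (s - jb y) ^ (1+b) ≤ 1 :=
      Real.rpow_le_one_of_one_le_of_nonpos (one_le_jb _) h1b
    have hker : ker a b y s ≤ (2*(t-x))^(1+a) := by
      calc ker a b y s ≤ (2*(t-x))^(1+a) * 1 :=
            mul_le_mul hAr hBr (Real.rpow_nonneg (jb_nonneg _) _) (Real.rpow_nonneg (by linarith) _)
        _ = (2*(t-x))^(1+a) := mul_one _
    have hdiv : (ε*(c/2))^p / (2*(t-x))^(1+a) ≤ |U y s| ^ p / ker a b y s :=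
      div_le_div₀ (Real.rpow_nonneg (abs_nonneg _) _) hnum (ker_pos a b y s) hker
    have heq : (ε*(c/2))^p / (2*(t-x))^(1+a) = C₀ := by
      rw [hC₀, div_eq_mul_inv, ← Real.rpow_neg (by linarith : (0:ℝ) ≤ 2*(t-x))]
    rw [← heq]; exact hdiv
  have hφc : ContinuousOn (fun _ : ℝ => C₀) (Icc s₁ s₂) := continuousOn_const
  have hkey := intsol_lower hp0 hU h0 h12 h2t htT hz (Or.inr rfl) hφc hφ
  rw [intervalIntegral.integral_const, smul_eq_mul] at hkey
  have hlen : s₂ - s₁ = δ := by rw [hs₁, hs₂]; ring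
  rw [hlen] at hkey
  calc (δ/2) * (ε*(c/2))^p * 2^(-(1+a)) * (t-x)^(-(1+a))
      = (1/2) * (δ * C₀) := by
        rw [hC₀, Real.mul_rpow (by norm_num : (0:ℝ) ≤ 2) (by linarith : (0:ℝ) ≤ t - x)]
        ring
    _ ≤ U x t := hkey

/-- Iteration step along the left-going characteristic: an `A`-form bound
(region `x ≥ 0`, `t - x ≥ K`) yields a `B`-form bound (region `x ≤ 0`, `x+t ≥ K`). -/
lemma AtoB (hp : 1 < p) (ha : 0 < a) (hab : p * (1 + a) + b = 0)
    (hU : IsIntSol p a b R ε T f g U) (hR : 1 ≤ R)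
    (hsf : ∀ z : ℝ, R < |z| → f z = 0) (hsg : ∀ z : ℝ, R < |z| → g z = 0)
    {N k : ℝ} (hN : 0 ≤ N) (hk : 0 ≤ k)
    (HA : ∀ x t : ℝ, 0 ≤ x → 3*R+3 ≤ t - x → t ≤ T →
      N * (t-x)^(-(1+a)) * (Real.log ((t-x)/(3*R+3)))^k ≤ U x t) :
    ∀ x t : ℝ, x ≤ 0 → 3*R+3 ≤ x + t → t ≤ T →
      (2^(1+b) * 2^(-(1+a)) / 4) * N^p / (k*p+1) * (x+t)^(-(1+a))
        * (Real.log ((x+t)/(3*R+3)))^(k*p+1) ≤ U x t := by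
  intro x t hx h2 htT
  have hp0 : (0:ℝ) < p := by linarith
  have hkp1 : (1:ℝ) ≤ k*p+1 := by nlinarith
  have hKpos : (0:ℝ) < 3*R+3 := by linarith
  have hK6 : (6:ℝ) ≤ 3*R+3 := by linarith
  have hXpos : (0:ℝ) < x + t := by linarith
  have hXt : x + t ≤ t := by linarith
  have h1b : 1 + b ≤ 0 := by nlinarith
  set s₁ := (x + t + (3*R+3))/2 with hs₁
  set s₂ := x + t with hs₂
  have h0 : 0 ≤ s₁ := by rw [hs₁]; linarith
  have h12 : s₁ ≤ s₂ := by rw [hs₁, hs₂]; linarith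
  have h2t : s₂ ≤ t := hXt
  have hz : ut0 f g x t = 0 := ut0_zero hsf hsg (by linarith)
    (by linarith) (by linarith)
  set Cn : ℝ := N^p * 2^(1+b) * (2*(x+t))^(-(1+a)) with hCn
  set φ : ℝ → ℝ := fun s => Cn * ((Real.log ((2*s - (x+t))/(3*R+3)))^(k*p) / (2*s - (x+t)))
    with hφdef
  have hτpos : ∀ s ∈ Icc s₁ s₂, 3*R+3 ≤ 2*s - (x+t) := by
    intro s hs; have := hs.1; rw [hs₁] at this; linarith
  have hφc : ContinuousOn φ (Icc s₁ s₂) := by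
    apply ContinuousOn.mul continuousOn_const
    apply ContinuousOn.div
    · intro s hs
      apply ContinuousWithinAt.rpow_const
      · apply ContinuousAt.continuousWithinAt
        have hc1 : ContinuousAt (fun s : ℝ => (2*s - (x+t))/(3*R+3)) s := by fun_prop
        exact hc1.log (div_pos (lt_of_lt_of_le hKpos (hτpos s hs)) hKpos).ne'
      · exact Or.inr (by positivity)
    · intro s hs; apply ContinuousAt.continuousWithinAt; fun_prop
    · intro s hs; have := hτpos s hs; intro h; rw [h] at this; linarith
  have hφ : ∀ s ∈ Icc s₁ s₂, φ s ≤ |U ((fun s => x + t - s) s) s| ^ p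
      / ker a b ((fun s => x + t - s) s) s := by
    intro s hs
    simp only []
    set y := x + t - s with hy
    set τ := 2*s - (x+t) with hτ
    have hτK : 3*R+3 ≤ τ := hτpos s hs
    have hτX : τ ≤ x + t := by rw [hτ]; have := hs.2; rw [hs₂] at this; linarith
    have hy0 : 0 ≤ y := by rw [hy]; have := hs.2; rw [hs₂] at this; linarith
    have hsT : s ≤ T := le_trans (le_trans hs.2 h2t) htT
    have hsy : s - y = τ := by rw [hy, hτ]; ring
    have hUb : N * (s-y)^(-(1+a)) * (Real.log ((s-y)/(3*R+3)))^k ≤ U y s :=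
      HA y s hy0 (by rw [hsy]; exact hτK) hsT
    rw [hsy] at hUb
    have hLnn : 0 ≤ Real.log (τ/(3*R+3)) :=
      Real.log_nonneg (by rw [le_div_iff₀ hKpos]; linarith)
    have hlow0 : 0 ≤ N * τ^(-(1+a)) * (Real.log (τ/(3*R+3)))^k := by
      have := Real.rpow_nonneg (le_trans hKpos.le hτK : (0:ℝ) ≤ τ) (-(1+a))
      have := Real.rpow_nonneg hLnn k
      positivity
    have hnum : (N * τ^(-(1+a)) * (Real.log (τ/(3*R+3)))^k)^p ≤ |U y s| ^ p :=
      Real.rpow_le_rpow hlow0 (le_trans hUb (le_abs_self _)) hp0.le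
    have hτ0 : (0:ℝ) < τ := lt_of_lt_of_le hKpos hτK
    have hA : jb (s + jb y) ≤ 2*(x+t) := by
      have h1' : jb (s + jb y) ≤ |s + jb y| + 1 := jb_le _
      have h2' : |s + jb y| = s + jb y := abs_of_nonneg
        (by have := hs.1; rw [hs₁] at this; linarith [jb_nonneg y])
      have h3' : jb y ≤ |y| + 1 := jb_le y
      rw [abs_of_nonneg hy0] at h3'
      have h4' : s + y = x + t := by rw [hy]; ring
      rw [h2'] at h1'
      linarith
    have hAr : jb (s + jb y) ^ (1+a) ≤ (2*(x+t))^(1+a) :=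
      Real.rpow_le_rpow (jb_nonneg _) hA (by linarith)
    have hB : τ/2 ≤ jb (s - jb y) := by
      have h1' : s - jb y ≤ jb (s - jb y) := le_jb _
      have h3' : jb y ≤ |y| + 1 := jb_le y
      rw [abs_of_nonneg hy0] at h3'
      have : τ - 1 ≤ s - jb y := by rw [← hsy]; linarith
      linarith
    have hBr : jb (s - jb y) ^ (1+b) ≤ (τ/2)^(1+b) :=
      Real.rpow_le_rpow_of_nonpos (by linarith) hB h1b
    have hker : ker a b y s ≤ (2*(x+t))^(1+a) * (τ/2)^(1+b) :=
      mul_le_mul hAr hBr (Real.rpow_nonneg (jb_nonneg _) _)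
        (Real.rpow_nonneg (by linarith) _)
    have hdiv : (N * τ^(-(1+a)) * (Real.log (τ/(3*R+3)))^k)^p
        / ((2*(x+t))^(1+a) * (τ/2)^(1+b)) ≤ |U y s| ^ p / ker a b y s :=
      div_le_div₀ (Real.rpow_nonneg (abs_nonneg _) _) hnum (ker_pos a b y s) hker
    have halg := rpow_algebra (N := N) (τ := τ) (X := x+t) (L := Real.log (τ/(3*R+3)))
      (k := k) hab hτ0 hXpos hLnn hN
    rw [halg] at hdiv
    have hφeq : φ s = N^p * 2^(1+b) * (2*(x+t))^(-(1+a))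
        * (Real.log (τ/(3*R+3)))^(k*p) / τ := by
      rw [hφdef, hCn]; simp only []; rw [hτ]; ring
    rw [hφeq]; exact hdiv
  have hkey := intsol_lower hp0 hU h0 h12 h2t htT hz (Or.inl rfl) hφc hφ
  have hint : (∫ s in s₁..s₂, φ s)
      = Cn * ((Real.log ((x+t)/(3*R+3)))^(k*p+1) / (2*(k*p+1))) := by
    rw [hφdef]
    rw [intervalIntegral.integral_const_mul]
    congr 1
    exact ftc_log (by positivity) hKpos h12 (by rw [hs₁]; ring) (by rw [hs₂]; ring)
  rw [hint] at hkey
  calc (2^(1+b) * 2^(-(1+a)) / 4) * N^p / (k*p+1) * (x+t)^(-(1+a))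
        * (Real.log ((x+t)/(3*R+3)))^(k*p+1)
      = (1/2) * (Cn * ((Real.log ((x+t)/(3*R+3)))^(k*p+1) / (2*(k*p+1)))) := by
        rw [hCn, Real.mul_rpow (by norm_num : (0:ℝ) ≤ 2) hXpos.le]
        field_simp
        ring
    _ ≤ U x t := hkey

/-- Iteration step along the right-going characteristic: a `B`-form bound
yields an `A`-form bound. -/
lemma BtoA (hp : 1 < p) (ha : 0 < a) (hab : p * (1 + a) + b = 0)
    (hU : IsIntSol p a b R ε T f g U) (hR : 1 ≤ R)
    (hsf : ∀ z : ℝ, R < |z| → f z = 0) (hsg : ∀ z : ℝ, R < |z| → g z = 0)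
    {N k : ℝ} (hN : 0 ≤ N) (hk : 0 ≤ k)
    (HB : ∀ x t : ℝ, x ≤ 0 → 3*R+3 ≤ x + t → t ≤ T →
      N * (x+t)^(-(1+a)) * (Real.log ((x+t)/(3*R+3)))^k ≤ U x t) :
    ∀ x t : ℝ, 0 ≤ x → 3*R+3 ≤ t - x → t ≤ T →
      (2^(1+b) * 2^(-(1+a)) / 4) * N^p / (k*p+1) * (t-x)^(-(1+a))
        * (Real.log ((t-x)/(3*R+3)))^(k*p+1) ≤ U x t := by
  intro x t hx h2 htT
  have hp0 : (0:ℝ) < p := by linarith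
  have hkp1 : (1:ℝ) ≤ k*p+1 := by nlinarith
  have hKpos : (0:ℝ) < 3*R+3 := by linarith
  have hK6 : (6:ℝ) ≤ 3*R+3 := by linarith
  have hXpos : (0:ℝ) < t - x := by linarith
  have hXt : t - x ≤ t := by linarith
  have h1b : 1 + b ≤ 0 := by nlinarith
  set s₁ := (t - x + (3*R+3))/2 with hs₁
  set s₂ := t - x with hs₂
  have h0 : 0 ≤ s₁ := by rw [hs₁]; linarith
  have h12 : s₁ ≤ s₂ := by rw [hs₁, hs₂]; linarith
  have h2t : s₂ ≤ t := hXt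
  have hz : ut0 f g x t = 0 := ut0_zero hsf hsg (by linarith)
    (by linarith) (by linarith)
  set Cn : ℝ := N^p * 2^(1+b) * (2*(t-x))^(-(1+a)) with hCn
  set φ : ℝ → ℝ := fun s => Cn * ((Real.log ((2*s - (t-x))/(3*R+3)))^(k*p) / (2*s - (t-x)))
    with hφdef
  have hτpos : ∀ s ∈ Icc s₁ s₂, 3*R+3 ≤ 2*s - (t-x) := by
    intro s hs; have := hs.1; rw [hs₁] at this; linarith
  have hφc : ContinuousOn φ (Icc s₁ s₂) := by
    apply ContinuousOn.mul continuousOn_const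
    apply ContinuousOn.div
    · intro s hs
      apply ContinuousWithinAt.rpow_const
      · apply ContinuousAt.continuousWithinAt
        have hc1 : ContinuousAt (fun s : ℝ => (2*s - (t-x))/(3*R+3)) s := by fun_prop
        exact hc1.log (div_pos (lt_of_lt_of_le hKpos (hτpos s hs)) hKpos).ne'
      · exact Or.inr (by positivity)
    · intro s hs; apply ContinuousAt.continuousWithinAt; fun_prop
    · intro s hs; have := hτpos s hs; intro h; rw [h] at this; linarith
  have hφ : ∀ s ∈ Icc s₁ s₂, φ s ≤ |U ((fun s => x - t + s) s) s| ^ p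
      / ker a b ((fun s => x - t + s) s) s := by
    intro s hs
    simp only []
    set y := x - t + s with hy
    set τ := 2*s - (t-x) with hτ
    have hτK : 3*R+3 ≤ τ := hτpos s hs
    have hτX : τ ≤ t - x := by rw [hτ]; have := hs.2; rw [hs₂] at this; linarith
    have hy0 : y ≤ 0 := by rw [hy]; have := hs.2; rw [hs₂] at this; linarith
    have hsT : s ≤ T := le_trans (le_trans hs.2 h2t) htT
    have hsy : y + s = τ := by rw [hy, hτ]; ring
    have hUb : N * (y+s)^(-(1+a)) * (Real.log ((y+s)/(3*R+3)))^k ≤ U y s :=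
      HB y s hy0 (by rw [hsy]; exact hτK) hsT
    rw [hsy] at hUb
    have hLnn : 0 ≤ Real.log (τ/(3*R+3)) :=
      Real.log_nonneg (by rw [le_div_iff₀ hKpos]; linarith)
    have hlow0 : 0 ≤ N * τ^(-(1+a)) * (Real.log (τ/(3*R+3)))^k := by
      have := Real.rpow_nonneg (le_trans hKpos.le hτK : (0:ℝ) ≤ τ) (-(1+a))
      have := Real.rpow_nonneg hLnn k
      positivity
    have hnum : (N * τ^(-(1+a)) * (Real.log (τ/(3*R+3)))^k)^p ≤ |U y s| ^ p :=
      Real.rpow_le_rpow hlow0 (le_trans hUb (le_abs_self _)) hp0.le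
    have hτ0 : (0:ℝ) < τ := lt_of_lt_of_le hKpos hτK
    have hsmy : s - y = t - x := by rw [hy]; ring
    have hA : jb (s + jb y) ≤ 2*(t-x) := by
      have h1' : jb (s + jb y) ≤ |s + jb y| + 1 := jb_le _
      have h2' : |s + jb y| = s + jb y := abs_of_nonneg
        (by have := hs.1; rw [hs₁] at this; linarith [jb_nonneg y])
      have h3' : jb y ≤ |y| + 1 := jb_le y
      rw [abs_of_nonpos hy0] at h3'
      rw [h2'] at h1'
      have : s - y = t - x := hsmy
      linarith
    have hAr : jb (s + jb y) ^ (1+a) ≤ (2*(t-x))^(1+a) :=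
      Real.rpow_le_rpow (jb_nonneg _) hA (by linarith)
    have hB : τ/2 ≤ jb (s - jb y) := by
      have h1' : s - jb y ≤ jb (s - jb y) := le_jb _
      have h3' : jb y ≤ |y| + 1 := jb_le y
      rw [abs_of_nonpos hy0] at h3'
      have : τ - 1 ≤ s - jb y := by rw [← hsy]; linarith
      linarith
    have hBr : jb (s - jb y) ^ (1+b) ≤ (τ/2)^(1+b) :=
      Real.rpow_le_rpow_of_nonpos (by linarith) hB h1b
    have hker : ker a b y s ≤ (2*(t-x))^(1+a) * (τ/2)^(1+b) :=
      mul_le_mul hAr hBr (Real.rpow_nonneg (jb_nonneg _) _)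
        (Real.rpow_nonneg (by linarith) _)
    have hdiv : (N * τ^(-(1+a)) * (Real.log (τ/(3*R+3)))^k)^p
        / ((2*(t-x))^(1+a) * (τ/2)^(1+b)) ≤ |U y s| ^ p / ker a b y s :=
      div_le_div₀ (Real.rpow_nonneg (abs_nonneg _) _) hnum (ker_pos a b y s) hker
    have halg := rpow_algebra (N := N) (τ := τ) (X := t-x) (L := Real.log (τ/(3*R+3)))
      (k := k) hab hτ0 hXpos hLnn hN
    rw [halg] at hdiv
    have hφeq : φ s = N^p * 2^(1+b) * (2*(t-x))^(-(1+a))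
        * (Real.log (τ/(3*R+3)))^(k*p) / τ := by
      rw [hφdef, hCn]; simp only []; rw [hτ]; ring
    rw [hφeq]; exact hdiv
  have hkey := intsol_lower hp0 hU h0 h12 h2t htT hz (Or.inr rfl) hφc hφ
  have hint : (∫ s in s₁..s₂, φ s)
      = Cn * ((Real.log ((t-x)/(3*R+3)))^(k*p+1) / (2*(k*p+1))) := by
    rw [hφdef]
    rw [intervalIntegral.integral_const_mul]
    congr 1
    exact ftc_log (by positivity) hKpos h12 (by rw [hs₁]; ring) (by rw [hs₂]; ring)
  rw [hint] at hkey
  calc (2^(1+b) * 2^(-(1+a)) / 4) * N^p / (k*p+1) * (t-x)^(-(1+a))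
        * (Real.log ((t-x)/(3*R+3)))^(k*p+1)
      = (1/2) * (Cn * ((Real.log ((t-x)/(3*R+3)))^(k*p+1) / (2*(k*p+1)))) := by
        rw [hCn, Real.mul_rpow (by norm_num : (0:ℝ) ≤ 2) hXpos.le]
        field_simp
        ring
    _ ≤ U x t := hkey

end main


set_option maxHeartbeats 1000000 in
theorem blow_up_critical_line (p a b R : ℝ) (f g : ℝ → ℝ)
    (hp : 1 < p) (ha : 0 < a) (hab : p * (1 + a) + b = 0)
    (hR : 1 ≤ R) (hf : ContDiff ℝ 2 f) (hg : ContDiff ℝ 1 g)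
    (hsf : ∀ x : ℝ, R < |x| → f x = 0) (hsg : ∀ x : ℝ, R < |x| → g x = 0) (hgint : 0 < ∫ x : ℝ, g x) :
    ∃ ε₂ : ℝ, 0 < ε₂ ∧ ∃ C : ℝ, 0 < C ∧ ∀ ε : ℝ, 0 < ε → ε ≤ ε₂ →
      ∀ T : ℝ, Real.exp (C * ε ^ (-(p * (p - 1)))) ≤ T →
        ¬ ∃ U : ℝ → ℝ → ℝ, IsIntSol p a b R ε T f g U := by
  classical
  obtain ⟨x0, δ, c, hδ, hδ1, hc, hx0R, hh⟩ := exists_bump hf hg hR hsf hsg hgint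
  have hp0 : (0:ℝ) < p := by linarith
  have hp1 : (0:ℝ) < p - 1 := by linarith
  have hKpos : (0:ℝ) < 3*R+3 := by linarith
  have hK6 : (6:ℝ) ≤ 3*R+3 := by linarith
  have hlogK : 0 ≤ Real.log (3*R+3) := Real.log_nonneg (by linarith)
  set cst : ℝ := 2^(1+b) * 2^(-(1+a)) / 4 with hcst
  have hcstpos : 0 < cst := by rw [hcst]; positivity
  set α : ℝ := (δ/2) * (c/2)^p * 2^(-(1+a)) with hα
  have hαpos : 0 < α := by rw [hα]; positivity
  set q : ℝ := p⁻¹ with hq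
  have hq0 : 0 < q := by rw [hq]; positivity
  have hq1 : q < 1 := by rw [hq, inv_lt_one_iff₀]; right; exact hp
  set γ : ℝ := Real.log p with hγ
  have hγpos : 0 < γ := Real.log_pos hp
  set β : ℝ := |Real.log cst| + |Real.log (p-1)| with hβ
  have hβ0 : 0 ≤ β := by rw [hβ]; positivity
  set S : ℝ := β*q*(1-q)⁻¹ + (γ*q*(q/(1-q)^2) + 2*γ*q*(1-q)⁻¹) with hS
  set C1 : ℝ := Real.exp (((p-1) * (S - Real.log cst - p * Real.log α))/p) with hC1
  have hC1pos : 0 < C1 := Real.exp_pos _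
  refine ⟨1, one_pos, max C1 1 + Real.log (3*R+3) + 1,
    by have := le_max_right C1 1; linarith, ?_⟩
  intro ε hε hε1 T hT
  rintro ⟨U, hU⟩
  set μ : ℝ := -(p*(p-1)) with hμ
  have hεν : 1 ≤ ε ^ μ :=
    Real.one_le_rpow_of_pos_of_le_one_of_nonpos hε hε1 (by rw [hμ]; nlinarith)
  have hεν0 : 0 < ε ^ μ := Real.rpow_pos_of_pos hε _
  have hTpos : 0 < T := lt_of_lt_of_le (Real.exp_pos _) hT
  have hCε : (max C1 1 + Real.log (3*R+3) + 1) * ε ^ μ ≤ Real.log T := by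
    have h := Real.log_le_log (Real.exp_pos _) hT
    rwa [Real.log_exp] at h
  have hmax1 : (1:ℝ) ≤ max C1 1 := le_max_right _ _
  have hKT : 3*R+3 ≤ T := by
    rw [← Real.exp_log hKpos, ← Real.exp_log hTpos]
    apply Real.exp_le_exp.mpr
    nlinarith
  have hLK : Real.log (T/(3*R+3)) = Real.log T - Real.log (3*R+3) :=
    Real.log_div hTpos.ne' hKpos.ne'
  have hLT : 1 + C1 * ε ^ μ ≤ Real.log (T/(3*R+3)) := by
    rw [hLK]
    have h1 : C1 * ε^μ ≤ (max C1 1) * ε^μ :=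
      mul_le_mul_of_nonneg_right (le_max_left _ _) hεν0.le
    have h2 : Real.log (3*R+3) + 1 ≤ (Real.log (3*R+3) + 1) * ε^μ :=
      le_mul_of_one_le_right (by linarith) hεν
    have h0 : (max C1 1 + Real.log (3*R+3) + 1) * ε^μ
        = (max C1 1)*ε^μ + (Real.log (3*R+3) + 1)*ε^μ := by ring
    rw [h0] at hCε
    linarith
  have hLT1 : 1 ≤ Real.log (T/(3*R+3)) := by linarith [mul_pos hC1pos hεν0]
  set lam : ℝ := Real.log (Real.log (T/(3*R+3))) with hlam
  have hlam0 : 0 ≤ lam := Real.log_nonneg hLT1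
  -- key strict inequality from the size of T
  have hθ0 : (p-1) * (S - (Real.log cst + p * (Real.log α + p * Real.log ε))) < p * lam := by
    have l0 : 0 < C1 * ε^μ := mul_pos hC1pos hεν0
    have l1 : Real.log C1 + μ * Real.log ε < lam := by
      have e1 : Real.log (C1 * ε^μ) = Real.log C1 + μ * Real.log ε := by
        rw [Real.log_mul hC1pos.ne' hεν0.ne', Real.log_rpow hε]
      have e2 : C1 * ε^μ < Real.log (T/(3*R+3)) := by linarith
      have := Real.log_lt_log l0 e2
      rw [e1] at this
      exact this
    have hlogC1 : Real.log C1 = ((p-1) * (S - Real.log cst - p * Real.log α))/p :=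
      Real.log_exp _
    have key := mul_lt_mul_of_pos_left l1 hp0
    have hEq : (p-1) * (S - (Real.log cst + p * (Real.log α + p * Real.log ε)))
        = p * (Real.log C1 + μ * Real.log ε) := by
      rw [hlogC1, hμ]; field_simp; ring
    rw [hEq]; exact key
  -- the iteration sequences
  set M₁ : ℝ := α * ε ^ p with hM₁
  have hM₁pos : 0 < M₁ := mul_pos hαpos (Real.rpow_pos_of_pos hε _)
  set kk : ℕ → ℝ := fun m => (p^(m+1) - 1)/(p-1) with hkk
  set Nq : ℕ → ℝ := fun m =>
    Nat.rec (cst * M₁^p) (fun m' Nm => cst * Nm^p / (kk m' * p + 1)) m with hNq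
  have hkk1 : ∀ m, 1 ≤ kk m := by
    intro m
    rw [hkk]
    rw [le_div_iff₀ hp1]
    have h1 : p^1 ≤ p^(m+1) := pow_le_pow_right₀ hp.le (by omega)
    rw [pow_one] at h1
    linarith
  have hkkrec : ∀ m, kk m * p + 1 = kk (m+1) := by
    intro m
    have hps : p^(m+1+1) = p^(m+1)*p := pow_succ p (m+1)
    show (p^(m+1)-1)/(p-1) * p + 1 = (p^(m+1+1) - 1)/(p-1)
    rw [hps]; field_simp; ring
  have hNq0 : Nq 0 = cst * M₁^p := rfl
  have hNqs : ∀ m, Nq (m+1) = cst * (Nq m)^p / (kk m * p + 1) := fun m => rfl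
  have hkkp1 : ∀ m, 0 < kk m * p + 1 := by
    intro m; nlinarith [hkk1 m]
  have hNpos : ∀ m, 0 < Nq m := by
    intro m
    induction m with
    | zero => rw [hNq0]; positivity
    | succ m ih =>
        rw [hNqs m]
        exact div_pos (mul_pos hcstpos (Real.rpow_pos_of_pos ih p)) (hkkp1 m)
  -- the alternating iteration
  have hA0 : ∀ x t : ℝ, 0 ≤ x → 3*R+3 ≤ t - x → t ≤ T →
      M₁ * (t-x)^(-(1+a)) * (Real.log ((t-x)/(3*R+3)))^(0:ℝ) ≤ U x t := by
    intro x t hx h2 htT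
    have hs := sigma1_bound hp ha hab hU hε.le hδ hδ1 hc.le hx0R hR hh hsf hsg
      (x := x) (t := t) (by linarith) (by linarith) htT
    calc M₁ * (t-x)^(-(1+a)) * (Real.log ((t-x)/(3*R+3)))^(0:ℝ)
        = (δ/2) * (ε*(c/2))^p * 2^(-(1+a)) * (t-x)^(-(1+a)) := by
          rw [Real.rpow_zero, hM₁, hα,
            Real.mul_rpow hε.le (by linarith : (0:ℝ) ≤ c/2)]
          ring
      _ ≤ U x t := hs
  have hiter : ∀ m : ℕ,
      (Even m → ∀ x t : ℝ, x ≤ 0 → 3*R+3 ≤ x+t → t ≤ T →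
        Nq m * (x+t)^(-(1+a)) * (Real.log ((x+t)/(3*R+3)))^(kk m) ≤ U x t) ∧
      (¬ Even m → ∀ x t : ℝ, 0 ≤ x → 3*R+3 ≤ t-x → t ≤ T →
        Nq m * (t-x)^(-(1+a)) * (Real.log ((t-x)/(3*R+3)))^(kk m) ≤ U x t) := by
    intro m
    induction m with
    | zero =>
      constructor
      · intro _ x t hx h2 htT
        have hB := AtoB hp ha hab hU hR hsf hsg hM₁pos.le le_rfl hA0 x t hx h2 htT
        have hkk0 : kk 0 = 1 := by
          simp only [hkk]; rw [zero_add, pow_one]; field_simp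
        have h01 : (0:ℝ)*p + 1 = 1 := by ring
        rw [hNq0, hkk0]
        rw [h01] at hB
        calc cst * M₁^p * (x+t)^(-(1+a)) * (Real.log ((x+t)/(3*R+3)))^(1:ℝ)
            = cst * M₁^p / 1 * (x+t)^(-(1+a)) * (Real.log ((x+t)/(3*R+3)))^(1:ℝ) := by
              rw [div_one]
          _ ≤ U x t := hB
      · intro h; exact absurd ⟨0, rfl⟩ h
    | succ m ih =>
      by_cases hev : Even m
      · constructor
        · intro h
          exact absurd (Nat.even_add_one.mp h) (by simpa using hev)
        · intro _ x t hx h2 htT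
          have hB := ih.1 hev
          have hstep := BtoA hp ha hab hU hR hsf hsg (hNpos m).le
            (by linarith [hkk1 m] : (0:ℝ) ≤ kk m) hB x t hx h2 htT
          rw [hNqs m, ← hkkrec m]
          exact hstep
      · constructor
        · intro _ x t hx h2 htT
          have hA := ih.2 hev
          have hstep := AtoB hp ha hab hU hR hsf hsg (hNpos m).le
            (by linarith [hkk1 m] : (0:ℝ) ≤ kk m) hA x t hx h2 htT
          rw [hNqs m, ← hkkrec m]
          exact hstep
        · intro h
          exact absurd (Nat.even_add_one.mpr hev) h
  -- logarithmic lower bound for Nq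
  have hG0 : Real.log (Nq 0) = Real.log cst + p * (Real.log α + p * Real.log ε) := by
    rw [hNq0, Real.log_mul hcstpos.ne' (Real.rpow_pos_of_pos hM₁pos p).ne',
      Real.log_rpow hM₁pos, hM₁,
      Real.log_mul hαpos.ne' (Real.rpow_pos_of_pos hε p).ne', Real.log_rpow hε]
  have hgrec : ∀ m, Real.log (Nq (m+1))
      = Real.log cst + p * Real.log (Nq m) - Real.log (kk m * p + 1) := by
    intro m
    rw [hNqs m, Real.log_div (mul_pos hcstpos (Real.rpow_pos_of_pos (hNpos m) p)).ne'
      (hkkp1 m).ne', Real.log_mul hcstpos.ne' (Real.rpow_pos_of_pos (hNpos m) p).ne',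
      Real.log_rpow (hNpos m)]
  have hkb : ∀ m : ℕ, Real.log (kk m * p + 1) ≤ |Real.log (p-1)| + ((m:ℝ)+2)*γ := by
    intro m
    rw [hkkrec m]
    have hpos : 0 < kk (m+1) := by linarith [hkk1 (m+1)]
    have hle : kk (m+1) ≤ p^(m+2)/(p-1) := by
      rw [hkk]
      rw [div_le_div_iff₀ hp1 hp1]
      have : (0:ℝ) < p^(m+1+1) := pow_pos hp0 _
      nlinarith
    calc Real.log (kk (m+1)) ≤ Real.log (p^(m+2)/(p-1)) := Real.log_le_log hpos hle
      _ = ((m:ℝ)+2)*γ - Real.log (p-1) := by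
          rw [Real.log_div (by positivity) hp1.ne', Real.log_pow, hγ]
          push_cast; ring
      _ ≤ |Real.log (p-1)| + ((m:ℝ)+2)*γ := by
          have := neg_abs_le (Real.log (p-1)); linarith
  set Sm : ℕ → ℝ := fun m => ∑ i ∈ Finset.range m, (β + ((i:ℝ)+2)*γ) * q^(i+1) with hSm
  have hglow : ∀ m, p^m * (Real.log (Nq 0) - Sm m) ≤ Real.log (Nq m) := by
    intro m
    induction m with
    | zero => simp [hSm]
    | succ m ih =>
      have e1 : p * Real.log (Nq m) - (β + ((m:ℝ)+2)*γ) ≤ Real.log (Nq (m+1)) := by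
        rw [hgrec m]
        have h2 := hkb m
        have h3 := neg_abs_le (Real.log cst)
        rw [hβ]
        have := abs_nonneg (Real.log (p-1))
        linarith
      have e2 : p^(m+1) * (Real.log (Nq 0) - Sm m) ≤ p * Real.log (Nq m) := by
        have h4 := mul_le_mul_of_nonneg_left ih hp0.le
        calc p^(m+1) * (Real.log (Nq 0) - Sm m)
            = p * (p^m * (Real.log (Nq 0) - Sm m)) := by rw [pow_succ]; ring
          _ ≤ p * Real.log (Nq m) := h4
      have e3 : Sm (m+1) = Sm m + (β + ((m:ℝ)+2)*γ)*q^(m+1) := by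
        simp only [hSm]; rw [Finset.sum_range_succ]
      have e4 : p^(m+1) * q^(m+1) = 1 := by
        rw [← mul_pow, hq, mul_inv_cancel₀ hp0.ne', one_pow]
      have e5 : p^(m+1) * (Real.log (Nq 0) - Sm (m+1))
          = p^(m+1) * (Real.log (Nq 0) - Sm m)
            - (β + ((m:ℝ)+2)*γ) * (p^(m+1) * q^(m+1)) := by
        rw [e3]; ring
      rw [e5, e4, mul_one]
      linarith
  -- uniform bound on the partial sums
  have hsumS : ∀ m, Sm m ≤ S := by
    have hgeo : HasSum (fun i : ℕ => q^i) (1-q)⁻¹ :=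
      hasSum_geometric_of_lt_one hq0.le hq1
    have hmul : HasSum (fun i : ℕ => (i:ℝ)*q^i) (q/(1-q)^2) := by
      have h := hasSum_coe_mul_geometric_of_norm_lt_one (r := q)
        (by rw [Real.norm_eq_abs, abs_of_pos hq0]; exact hq1)
      exact h
    have hfsum : HasSum (fun i : ℕ => (β + ((i:ℝ)+2)*γ) * q^(i+1)) S := by
      have h1 := (hmul.mul_left (γ*q)).add (hgeo.mul_left (2*γ*q))
      have h2 := (hgeo.mul_left (β*q)).add h1
      rw [hS]
      refine (congrArg (HasSum · _) ?_).mpr h2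
      funext i
      rw [pow_succ]
      ring
    intro m
    apply sum_le_hasSum (Finset.range m) _ hfsum
    intro i _
    have hi0 : (0:ℝ) ≤ (i:ℝ) := Nat.cast_nonneg i
    have h2 : (0:ℝ) ≤ ((i:ℝ)+2)*γ :=
      mul_nonneg (by linarith only [hi0]) hγpos.le
    have : (0:ℝ) ≤ β + ((i:ℝ)+2)*γ := by linarith only [hβ0, h2]
    exact mul_nonneg this (pow_nonneg hq0.le _)
  -- put everything together at the point (0, T)
  set θ : ℝ := (Real.log (Nq 0) - S) + (p/(p-1))*lam with hθdef
  have hθpos : 0 < θ := by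
    have h1 : (p-1)*(S - Real.log (Nq 0)) < p*lam := by
      rw [hG0]; exact hθ0
    have h2 : (p-1) * θ = (p-1)*(Real.log (Nq 0) - S) + p*lam := by
      rw [hθdef]; field_simp
    have h3 : 0 < (p-1) * θ := by linarith only [h1, h2]
    by_contra hle
    push_neg at hle
    have := mul_nonpos_of_nonneg_of_nonpos hp1.le hle
    linarith only [h3, this]
  set Z : ℝ := lam/(p-1) + (1+a)*Real.log T + Real.log (|U 0 T| + 1) with hZ
  obtain ⟨n, hn⟩ := pow_unbounded_of_one_lt (Z/θ) hp
  have hp2n : p^n ≤ p^(2*n) := pow_le_pow_right₀ hp.le (by omega)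
  have hZθ : Z < p^(2*n) * θ := by
    have h1 : Z/θ < p^(2*n) := lt_of_lt_of_le hn hp2n
    calc Z = (Z/θ) * θ := by field_simp
      _ < p^(2*n) * θ := by exact mul_lt_mul_of_pos_right h1 hθpos
  have hbound := (hiter (2*n)).1 (even_two_mul n) 0 T le_rfl
    (by rw [zero_add]; exact hKT) le_rfl
  rw [zero_add] at hbound
  have hLTpos : 0 < Real.log (T/(3*R+3)) := by linarith
  have hexp1 : Nq (2*n) = Real.exp (Real.log (Nq (2*n))) := (Real.exp_log (hNpos _)).symm
  have hexp2 : T^(-(1+a)) = Real.exp (Real.log T * (-(1+a))) := Real.rpow_def_of_pos hTpos _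
  have hexp3 : (Real.log (T/(3*R+3)))^(kk (2*n))
      = Real.exp (lam * kk (2*n)) := by
    rw [Real.rpow_def_of_pos hLTpos, hlam]
  have hval : Nq (2*n) * T^(-(1+a)) * (Real.log (T/(3*R+3)))^(kk (2*n))
      = Real.exp (Real.log (Nq (2*n)) + Real.log T * (-(1+a)) + lam * kk (2*n)) := by
    rw [Real.exp_add, Real.exp_add, Real.exp_log (hNpos _), ← hexp2, ← hexp3]
  -- lower bound the exponent
  have hkklam : p^(2*n) * (p/(p-1)) * lam - lam/(p-1) ≤ kk (2*n) * lam := by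
    have hkeq : kk (2*n) = p^(2*n)*(p/(p-1)) - 1/(p-1) := by
      have hps : p^(2*n+1) = p^(2*n)*p := pow_succ p (2*n)
      simp only [hkk]
      rw [hps]
      field_simp
    have heq2 : (p^(2*n)*(p/(p-1)) - 1/(p-1)) * lam
        = p^(2*n) * (p/(p-1)) * lam - lam/(p-1) := by ring
    rw [hkeq, heq2]
  have hgfinal : p^(2*n)*(Real.log (Nq 0) - S) ≤ Real.log (Nq (2*n)) := by
    have h1 := hglow (2*n)
    have h2 := hsumS (2*n)
    have h3 : (0:ℝ) < p^(2*n) := pow_pos hp0 _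
    have h4 : p^(2*n)*(Real.log (Nq 0) - S) ≤ p^(2*n)*(Real.log (Nq 0) - Sm (2*n)) :=
      mul_le_mul_of_nonneg_left (by linarith only [h2]) h3.le
    linarith only [h1, h4]
  have hexpo : Real.log (|U 0 T| + 1)
      < Real.log (Nq (2*n)) + Real.log T * (-(1+a)) + lam * kk (2*n) := by
    have h1 : p^(2*n) * θ - lam/(p-1) - (1+a)*Real.log T
        ≤ Real.log (Nq (2*n)) + Real.log T * (-(1+a)) + lam * kk (2*n) := by
      have expand : p^(2*n) * θ = p^(2*n)*(Real.log (Nq 0) - S)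
          + p^(2*n) * (p/(p-1)) * lam := by rw [hθdef]; ring
      have h5 : kk (2*n) * lam = lam * kk (2*n) := by ring
      linarith only [hkklam, hgfinal, expand, h5]
    have h2 : Real.log (|U 0 T| + 1) < p^(2*n) * θ - lam/(p-1) - (1+a)*Real.log T := by
      rw [hZ] at hZθ
      linarith only [hZθ]
    linarith only [h1, h2]
  have habs : 0 < |U 0 T| + 1 := by positivity
  have hfin : |U 0 T| + 1 < Nq (2*n) * T^(-(1+a)) * (Real.log (T/(3*R+3)))^(kk (2*n)) := by
    rw [hval, ← Real.exp_log habs]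
    exact Real.exp_lt_exp.mpr hexpo
  have h9 := le_abs_self (U 0 T)
  linarith only [h9, hfin, hbound]
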